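/- Equivalence of GLS and whitened ZF estimators: if R_y = V Vᵀ + R_z with R_z positive definite and Vᵀ R_z^{-1} V invertible, then (Vᵀ R_y^{-1} V)^{-1} Vᵀ R_y^{-1} Y = (V̄ᵀ V̄)^{-1} V̄ᵀ Ȳ, where V̄ = R_z^{-1/2} V and Ȳ = R_z^{-1/2} Y. -/
import Mathlib

open Matrix

/-- Equivalence of GLS and whitened ZF estimators: if R_y = V Vᵀ + R_z with R_z
positive definite (with positive definite square root S = R_z^{1/2}) and
Vᵀ R_z⁻¹ V invertible, then
(Vᵀ R_y⁻¹ V)⁻¹ Vᵀ R_y⁻¹ Y = (V̄ᵀ V̄)⁻¹ V̄ᵀ Ȳ with V̄ = R_z^{-1/2} V, Ȳ = R_z^{-1/2} Y. -/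
theorem gls_eq_whitened_zf (L K M : ℕ)
    (V : Matrix (Fin L) (Fin K) ℝ) (Y : Matrix (Fin L) (Fin M) ℝ)
    (Rz S : Matrix (Fin L) (Fin L) ℝ)
    (hRz : Rz.PosDef) (hS : S.PosDef) (hSS : S * S = Rz)
    (hinv : IsUnit (Vᵀ * Rz⁻¹ * V).det) :
    (Vᵀ * (V * Vᵀ + Rz)⁻¹ * V)⁻¹ * Vᵀ * (V * Vᵀ + Rz)⁻¹ * Y =
      ((S⁻¹ * V)ᵀ * (S⁻¹ * V))⁻¹ * (S⁻¹ * V)ᵀ * (S⁻¹ * Y) := by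
  set A := Vᵀ * Rz⁻¹ * V with hA
  set Ry := V * Vᵀ + Rz with hRy
  -- basic invertibility facts
  have hRzd : IsUnit Rz.det := (isUnit_iff_isUnit_det _).1 hRz.isUnit
  have hSd : IsUnit S.det := (isUnit_iff_isUnit_det _).1 hS.isUnit
  have hVVt : (V * Vᵀ).PosSemidef := by
    simpa using posSemidef_self_mul_conjTranspose V
  have hRyPD : Ry.PosDef := Matrix.PosDef.posSemidef_add hVVt hRz
  have hRyd : IsUnit Ry.det := (isUnit_iff_isUnit_det _).1 hRyPD.isUnit
  have hAPSD : A.PosSemidef := by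
    have := hRz.inv.posSemidef.conjTranspose_mul_mul_same V
    simpa [hA, Matrix.mul_assoc] using this
  have hAIPD : (A + 1).PosDef := Matrix.PosDef.posSemidef_add hAPSD Matrix.PosDef.one
  have hAId : IsUnit (A + 1).det := (isUnit_iff_isUnit_det _).1 hAIPD.isUnit
  -- key identity: Vᵀ Rz⁻¹ Ry = (A + 1) Vᵀ
  have key : Vᵀ * Rz⁻¹ * Ry = (A + 1) * Vᵀ := by
    rw [hRy]
    rw [Matrix.mul_add, ← Matrix.mul_assoc (Vᵀ * Rz⁻¹) V Vᵀ, Matrix.mul_assoc Vᵀ Rz⁻¹ Rz,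
      Matrix.nonsing_inv_mul Rz hRzd, Matrix.mul_one, Matrix.add_mul, Matrix.one_mul, ← hA]
  have hVRy : Vᵀ * Ry⁻¹ = (A + 1)⁻¹ * (Vᵀ * Rz⁻¹) := by
    have h1 : Vᵀ * Rz⁻¹ = (A + 1) * Vᵀ * Ry⁻¹ := by
      rw [← key, Matrix.mul_assoc, Matrix.mul_nonsing_inv Ry hRyd, Matrix.mul_one]
    calc Vᵀ * Ry⁻¹ = (A + 1)⁻¹ * ((A + 1) * Vᵀ * Ry⁻¹) := by
          rw [← Matrix.mul_assoc, ← Matrix.mul_assoc,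
            Matrix.nonsing_inv_mul _ hAId, Matrix.one_mul]
      _ = (A + 1)⁻¹ * (Vᵀ * Rz⁻¹) := by rw [← h1]
  -- LHS
  have hVRyV : Vᵀ * Ry⁻¹ * V = (A + 1)⁻¹ * A := by
    rw [hVRy, Matrix.mul_assoc, Matrix.mul_assoc, ← Matrix.mul_assoc Vᵀ, hA]
  have hLHS : (Vᵀ * Ry⁻¹ * V)⁻¹ * Vᵀ * Ry⁻¹ * Y = A⁻¹ * (Vᵀ * Rz⁻¹) * Y := by
    rw [hVRyV, Matrix.mul_assoc _ Vᵀ Ry⁻¹, hVRy,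
      Matrix.mul_inv_rev, Matrix.nonsing_inv_nonsing_inv _ hAId,
      Matrix.mul_assoc A⁻¹, ← Matrix.mul_assoc (A + 1),
      Matrix.mul_nonsing_inv _ hAId, Matrix.one_mul, Matrix.mul_assoc]
  -- RHS
  have hSt : Sᵀ = S := by simpa using hS.isHermitian.eq
  have hSinvt : (S⁻¹)ᵀ = S⁻¹ := by rw [Matrix.transpose_nonsing_inv, hSt]
  have hSinv2 : S⁻¹ * S⁻¹ = Rz⁻¹ := by rw [← Matrix.mul_inv_rev, hSS]
  have hRHS : ((S⁻¹ * V)ᵀ * (S⁻¹ * V))⁻¹ * (S⁻¹ * V)ᵀ * (S⁻¹ * Y) =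
      A⁻¹ * (Vᵀ * Rz⁻¹) * Y := by
    have h2 : (S⁻¹ * V)ᵀ * (S⁻¹ * V) = A := by
      rw [Matrix.transpose_mul, hSinvt, hA, Matrix.mul_assoc, ← Matrix.mul_assoc S⁻¹,
        hSinv2, Matrix.mul_assoc]
    have h3 : (S⁻¹ * V)ᵀ * (S⁻¹ * Y) = Vᵀ * Rz⁻¹ * Y := by
      rw [Matrix.transpose_mul, hSinvt, Matrix.mul_assoc, ← Matrix.mul_assoc S⁻¹,
        hSinv2, Matrix.mul_assoc, ← Matrix.mul_assoc]
    rw [h2, Matrix.mul_assoc, h3, ← Matrix.mul_assoc]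
  rw [hRHS, ← hLHS]
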